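/- For every n ≥ 2: for each odd i with 1 ≤ i < n, the projection S_n[x_i, x_{i+1}] equals x_{i+1} x_i² x_{i+1}; for each even i with 2 ≤ i < n, S_n[x_i, x_{i+1}] equals x_i x_{i+1}² x_i; and for each 1 ≤ i < j ≤ n with j − i ≥ 2, S_n[x_i, x_j] equals x_j x_i x_j x_i. -/
import Mathlib


/-- Insert `x` right after the first letter of a list. -/
def insert2 (x : ℕ) : List ℕ → List ℕ
  | [] => [x]
  | a :: t => a :: x :: t

/-- The two linear parts of the double-linear word `S n`:
`S 1 = x₁²`; for odd `k`, `x_{k+1}` is prepended to the first part and inserted after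
the first letter of the second part; for even `k`, vice versa. -/
def sPair : ℕ → List ℕ × List ℕ
  | 0 => ([], [])
  | 1 => ([1], [1])
  | (k+2) =>
    let p := sPair (k+1)
    if (k+1) % 2 = 1 then ((k+2) :: p.1, insert2 (k+2) p.2)
    else (insert2 (k+2) p.1, (k+2) :: p.2)

/-- The word `S n`, e.g. `S 8 = (x₈x₆x₇x₄x₅x₂x₃x₁)(x₇x₈x₅x₆x₃x₄x₁x₂)`. -/
def sW (n : ℕ) : List ℕ := (sPair n).1 ++ (sPair n).2

/-- Projection of a word to the two variables `i`, `j` (deleting all other letters). -/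
def proj2 (u : List ℕ) (i j : ℕ) : List ℕ := u.filter (fun a => a == i || a == j)

lemma sPair_succ (n : ℕ) (hn : 1 ≤ n) :
    sPair (n+1) = if n % 2 = 1 then ((n+1) :: (sPair n).1, insert2 (n+1) (sPair n).2)
      else (insert2 (n+1) (sPair n).1, (n+1) :: (sPair n).2) := by
  obtain ⟨m, rfl⟩ : ∃ m, n = m + 1 := ⟨n - 1, by omega⟩
  rfl

lemma filter_or_nil {l : List ℕ} {i j : ℕ} (h : ∀ a ∈ l, a ≠ j) :
    l.filter (fun a => a == i || a == j) = l.filter (fun a => a == i) := by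
  apply List.filter_congr; intro a ha; simp [h a ha]

def SInv (n : ℕ) : Prop :=
    (∀ a ∈ (sPair n).1, 1 ≤ a ∧ a ≤ n) ∧
    (∀ a ∈ (sPair n).2, 1 ≤ a ∧ a ≤ n) ∧
    (n % 2 = 0 → ∃ t, (sPair n).1 = n :: t) ∧
    (n % 2 = 1 → ∃ t, (sPair n).2 = n :: t) ∧
    (∀ i, 1 ≤ i → i ≤ n →
      (sPair n).1.filter (fun a => a == i) = [i] ∧
      (sPair n).2.filter (fun a => a == i) = [i]) ∧
    (∀ i j, 1 ≤ i → i < j → j ≤ n →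
      (sPair n).1.filter (fun a => a == i || a == j) =
        (if j = i+1 ∧ i % 2 = 0 then [i, j] else [j, i]) ∧
      (sPair n).2.filter (fun a => a == i || a == j) =
        (if j = i+1 ∧ i % 2 = 1 then [i, j] else [j, i]))

lemma key (n : ℕ) (hn : 2 ≤ n) : SInv n := by
  induction n, hn using Nat.le_induction with
  | base =>
    unfold SInv
    refine ⟨?_, ?_, ?_, ?_, ?_, ?_⟩
    · intro a ha; simp [sPair, insert2] at ha; omega
    · intro a ha; simp [sPair, insert2] at ha; omega
    · intro _; exact ⟨[1], rfl⟩
    · intro h; omega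
    · intro i h1 h2
      interval_cases i <;> simp [sPair, insert2, List.filter]
    · intro i j h1 h2 h3
      have : i = 1 ∧ j = 2 := by omega
      obtain ⟨rfl, rfl⟩ := this
      simp [sPair, insert2, List.filter]
  | succ n hn ih =>
    obtain ⟨hA, hB, hheadA, hheadB, hsingle, hpair⟩ := ih
    unfold SInv
    rw [sPair_succ n (by omega)]
    rcases Nat.mod_two_eq_zero_or_one n with h0 | h1
    · -- n even : A' = insert2 (n+1) A, B' = (n+1)::B
      rw [if_neg (by omega : ¬ n % 2 = 1)]
      obtain ⟨t, hAt⟩ := hheadA h0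
      have hins : insert2 (n+1) (sPair n).1 = n :: (n+1) :: t := by rw [hAt]; rfl
      have ht_mem : ∀ a ∈ t, 1 ≤ a ∧ a ≤ n := fun a ha =>
        hA a (by rw [hAt]; exact List.mem_cons_of_mem _ ha)
      have ht_n : ∀ a ∈ t, a ≠ n := by
        have h := (hsingle n (by omega) le_rfl).1
        rw [hAt] at h
        simp [List.filter_cons] at h
        exact h
      have ht_n1 : ∀ a ∈ t, a ≠ n+1 := fun a ha h => by
        have := ht_mem a ha; omega
      have hA_n1 : ∀ a ∈ (sPair n).1, a ≠ n+1 := fun a ha h => by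
        have := hA a ha; omega
      have hB_n1 : ∀ a ∈ (sPair n).2, a ≠ n+1 := fun a ha h => by
        have := hB a ha; omega
      refine ⟨?_, ?_, ?_, ?_, ?_, ?_⟩
      · intro a ha; rw [hins] at ha; simp at ha
        rcases ha with rfl | rfl | ha
        · omega
        · omega
        · have := ht_mem a ha; omega
      · intro a ha; simp at ha
        rcases ha with rfl | ha
        · omega
        · have := hB a ha; omega
      · intro h; omega
      · intro _; exact ⟨(sPair n).2, rfl⟩
      · intro i h1 h2
        rw [hins]
        rcases Nat.lt_or_ge i (n+1) with hi | hi
        · -- i ≤ n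
          have hiA := (hsingle i h1 (by omega)).1
          have hiB := (hsingle i h1 (by omega)).2
          rw [hAt] at hiA
          constructor
          · simp only [List.filter_cons]
            by_cases hin : i = n
            · subst hin
              simp [List.filter_cons] at hiA ⊢
              simpa using hiA
            · have : (n == i) = false := by simp; omega
              have : ((n+1) == i) = false := by simp; omega
              simp only [List.filter_cons] at hiA ⊢
              simp only [show (n == i) = false from by simp; omega,
                show ((n+1) == i) = false from by simp; omega] at hiA ⊢
              simpa using hiA
          · simp only [List.filter_cons, show ((n+1) == i) = false from by simp; omega]
            simpa using hiB
        · have : i = n + 1 := by omega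
          subst this
          constructor
          · have htf : t.filter (fun a => a == n+1) = [] :=
              List.filter_eq_nil_iff.mpr (fun a ha => by simp [ht_n1 a ha])
            simp [List.filter_cons, htf, show ¬ (n = n+1) by omega]
          · have hBf : (sPair n).2.filter (fun a => a == n+1) = [] :=
              List.filter_eq_nil_iff.mpr (fun a ha => by simp [hB_n1 a ha])
            simp [List.filter_cons, hBf]
      · intro i j h1 h2 h3
        rcases Nat.lt_or_ge j (n+1) with hj | hj
        · -- j ≤ n : unchanged
          have hp := hpair i j h1 h2 (by omega)
          constructor
          · rw [hins]
            have hAt' := hp.1; rw [hAt] at hAt'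
            simp only [List.filter_cons] at hAt' ⊢
            have hne : ((n+1) == i || (n+1) == j) = false := by simp; omega
            simp only [hne]
            simpa using hAt'
          · simp only [List.filter_cons, show ((n+1) == i || (n+1) == j) = false from by simp; omega]
            simpa using hp.2
        · -- j = n+1
          have : j = n + 1 := by omega
          subst this
          have hif1 : ¬ (n+1 = i+1 ∧ i % 2 = 0) ∨ (i = n) := by omega
          constructor
          · rw [hins]
            by_cases hin : i = n
            · subst hin
              have htf : t.filter (fun a => a == i || a == i+1) = [] :=
                List.filter_eq_nil_iff.mpr (fun a ha => by
                  have h1 := ht_n a ha; have h2 := ht_n1 a ha; simp; omega)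
              simp [List.filter_cons, htf, h0]
            · have hti : t.filter (fun a => a == i || a == n+1) = t.filter (fun a => a == i) :=
                filter_or_nil ht_n1
              have : t.filter (fun a => a == i) = [i] := by
                have h := (hsingle i h1 (by omega)).1
                rw [hAt] at h
                simp only [List.filter_cons, show (n == i) = false from by simp; omega] at h
                simpa using h
              simp [List.filter_cons, hti, this, show ¬(n = i) by omega, show ¬(n+1 = i+1 ∧ i % 2 = 0) by omega]
          · have hBi : (sPair n).2.filter (fun a => a == i || a == n+1) =
                (sPair n).2.filter (fun a => a == i) := filter_or_nil hB_n1
            have hsi := (hsingle i h1 (by omega)).2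
            by_cases hin : i = n
            · subst hin
              simp [List.filter_cons, hBi, hsi, h0]
            · simp [List.filter_cons, hBi, hsi, show ¬ n = i from fun h => hin h.symm]
    · -- n odd : A' = (n+1)::A, B' = insert2 (n+1) B
      rw [if_pos h1]
      obtain ⟨t, hBt⟩ := hheadB h1
      have hins : insert2 (n+1) (sPair n).2 = n :: (n+1) :: t := by rw [hBt]; rfl
      have ht_mem : ∀ a ∈ t, 1 ≤ a ∧ a ≤ n := fun a ha =>
        hB a (by rw [hBt]; exact List.mem_cons_of_mem _ ha)
      have ht_n : ∀ a ∈ t, a ≠ n := by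
        have h := (hsingle n (by omega) le_rfl).2
        rw [hBt] at h
        simp [List.filter_cons] at h
        exact h
      have ht_n1 : ∀ a ∈ t, a ≠ n+1 := fun a ha h => by
        have := ht_mem a ha; omega
      have hA_n1 : ∀ a ∈ (sPair n).1, a ≠ n+1 := fun a ha h => by
        have := hA a ha; omega
      refine ⟨?_, ?_, ?_, ?_, ?_, ?_⟩
      · intro a ha; simp at ha
        rcases ha with rfl | ha
        · omega
        · have := hA a ha; omega
      · intro a ha; rw [hins] at ha; simp at ha
        rcases ha with rfl | rfl | ha
        · omega
        · omega
        · have := ht_mem a ha; omega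
      · intro _; exact ⟨(sPair n).1, rfl⟩
      · intro h; omega
      · intro i hi1 hi2
        rw [hins]
        rcases Nat.lt_or_ge i (n+1) with hi | hi
        · have hiA := (hsingle i hi1 (by omega)).1
          have hiB := (hsingle i hi1 (by omega)).2
          rw [hBt] at hiB
          constructor
          · simp only [List.filter_cons, show ((n+1) == i) = false from by simp; omega]
            simpa using hiA
          · by_cases hin : i = n
            · subst hin
              simp [List.filter_cons] at hiB ⊢
              simpa using hiB
            · simp only [List.filter_cons] at hiB ⊢
              simp only [show (n == i) = false from by simp; omega,
                show ((n+1) == i) = false from by simp; omega] at hiB ⊢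
              simpa using hiB
        · have : i = n + 1 := by omega
          subst this
          constructor
          · have hAf : (sPair n).1.filter (fun a => a == n+1) = [] :=
              List.filter_eq_nil_iff.mpr (fun a ha => by simp [hA_n1 a ha])
            simp [List.filter_cons, hAf]
          · have htf : t.filter (fun a => a == n+1) = [] :=
              List.filter_eq_nil_iff.mpr (fun a ha => by simp [ht_n1 a ha])
            simp [List.filter_cons, htf, show ¬ (n = n+1) by omega]
      · intro i j hi1 h2 h3
        rcases Nat.lt_or_ge j (n+1) with hj | hj
        · have hp := hpair i j hi1 h2 (by omega)
          constructor
          · simp only [List.filter_cons, show ((n+1) == i || (n+1) == j) = false from by simp; omega]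
            simpa using hp.1
          · rw [hins]
            have hBt' := hp.2; rw [hBt] at hBt'
            simp only [List.filter_cons] at hBt' ⊢
            have hne : ((n+1) == i || (n+1) == j) = false := by simp; omega
            simp only [hne]
            simpa using hBt'
        · have : j = n + 1 := by omega
          subst this
          constructor
          · have hAi : (sPair n).1.filter (fun a => a == i || a == n+1) =
                (sPair n).1.filter (fun a => a == i) := filter_or_nil hA_n1
            have hsi := (hsingle i hi1 (by omega)).1
            by_cases hin : i = n
            · subst hin
              simp [List.filter_cons, hAi, hsi, h1]
            · simp [List.filter_cons, hAi, hsi, show ¬ n = i from fun h => hin h.symm]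
          · rw [hins]
            by_cases hin : i = n
            · subst hin
              have htf : t.filter (fun a => a == i || a == i+1) = [] :=
                List.filter_eq_nil_iff.mpr (fun a ha => by
                  have h1 := ht_n a ha; have h2 := ht_n1 a ha; simp; omega)
              simp [List.filter_cons, htf, h1]
            · have hti : t.filter (fun a => a == i || a == n+1) = t.filter (fun a => a == i) :=
                filter_or_nil ht_n1
              have : t.filter (fun a => a == i) = [i] := by
                have h := (hsingle i hi1 (by omega)).2
                rw [hBt] at h
                simp only [List.filter_cons, show (n == i) = false from by simp; omega] at h
                simpa using h
              simp [List.filter_cons, hti, this, show ¬(n = i) by omega, show ¬(n+1 = i+1 ∧ i % 2 = 1) by omega]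


/-- For every `n ≥ 2`: for odd `1 ≤ i < n`, `S n[xᵢ,x_{i+1}] = x_{i+1} xᵢ² x_{i+1}`;
for even `2 ≤ i < n`, `S n[xᵢ,x_{i+1}] = xᵢ x_{i+1}² xᵢ`; and for `1 ≤ i < j ≤ n`
with `j - i ≥ 2`, `S n[xᵢ,xⱼ] = xⱼ xᵢ xⱼ xᵢ`. -/
theorem sW_projections (n : ℕ) (hn : 2 ≤ n) :
    (∀ i : ℕ, 1 ≤ i → i < n → Odd i → proj2 (sW n) i (i+1) = [i+1, i, i, i+1]) ∧
    (∀ i : ℕ, 2 ≤ i → i < n → Even i → proj2 (sW n) i (i+1) = [i, i+1, i+1, i]) ∧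
    (∀ i j : ℕ, 1 ≤ i → i < j → j ≤ n → 2 ≤ j - i →
      proj2 (sW n) i j = [j, i, j, i]) := by
  obtain ⟨_, _, _, _, _, hpair⟩ := key n hn
  refine ⟨?_, ?_, ?_⟩
  · intro i h1 h2 hodd
    have hi : i % 2 = 1 := Nat.odd_iff.mp hodd
    have hp := hpair i (i+1) h1 (by omega) (by omega)
    rw [proj2, sW, List.filter_append, hp.1, hp.2]
    simp [show ¬(i+1 = i+1 ∧ i % 2 = 0) by omega, show (i+1 = i+1 ∧ i % 2 = 1) by omega]
  · intro i h1 h2 heven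
    have hi : i % 2 = 0 := Nat.even_iff.mp heven
    have hp := hpair i (i+1) (by omega) (by omega) (by omega)
    rw [proj2, sW, List.filter_append, hp.1, hp.2]
    simp [show (i+1 = i+1 ∧ i % 2 = 0) by omega, show ¬(i+1 = i+1 ∧ i % 2 = 1) by omega]
  · intro i j h1 h2 h3 h4
    have hp := hpair i j h1 h2 h3
    rw [proj2, sW, List.filter_append, hp.1, hp.2]
    simp [show ¬(j = i+1 ∧ i % 2 = 0) by omega, show ¬(j = i+1 ∧ i % 2 = 1) by omega]
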